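/- For all integers $k, l, m, n$: (1) $D_4(2k+1, 2l, 2m, 2n) \equiv 8m + 1 \pmod{16}$; (2) $\widetilde{D}_4(2k+1, 2l, 2m, 2n) \equiv 8m + 1 \pmod{16}$. -/

import Mathlib

/-- The group determinant of `C₄`: the determinant of the `4 × 4` circulant matrix whose
`(i, j)` entry is `x_{(i - j) mod 4}`. -/
def D4 {R : Type*} [CommRing R] (x0 x1 x2 x3 : R) : R :=
  Matrix.det !![x0, x3, x2, x1; x1, x0, x3, x2; x2, x1, x0, x3; x3, x2, x1, x0]

/-- `D̃₄`. -/
def D4t {R : Type*} [CommRing R] (x0 x1 x2 x3 : R) : R :=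
  (x0 ^ 2 - x2 ^ 2 + 2 * x1 * x3) ^ 2 + (x1 ^ 2 - x3 ^ 2 - 2 * x0 * x2) ^ 2

lemma D4_eq {R : Type*} [CommRing R] (x0 x1 x2 x3 : R) :
    D4 x0 x1 x2 x3 = x0^4 - 4*x0^2*x1*x3 - 2*x0^2*x2^2 + 4*x0*x1^2*x2 + 4*x0*x2*x3^2
      - x1^4 + 2*x1^2*x3^2 - 4*x1*x2^2*x3 + x2^4 - x3^4 := by
  simp [D4, Matrix.det_succ_row_zero, Fin.sum_univ_succ, Fin.succAbove]
  ring

/-- `D₄(2k+1, 2l, 2m, 2n) ≡ D̃₄(2k+1, 2l, 2m, 2n) ≡ 8m + 1 (mod 16)`. -/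
theorem D4_D4t_odd_first_mod_sixteen (k l m n : ℤ) :
    (D4 (2 * k + 1) (2 * l) (2 * m) (2 * n) ≡ 8 * m + 1 [ZMOD 16]) ∧
    (D4t (2 * k + 1) (2 * l) (2 * m) (2 * n) ≡ 8 * m + 1 [ZMOD 16]) := by
  obtain ⟨a, ha⟩ := Int.even_mul_succ_self k
  obtain ⟨b, hb⟩ := Int.even_mul_succ_self m
  refine ⟨?_, ?_⟩ <;> rw [Int.modEq_iff_dvd]
  · rw [D4_eq]
    refine ⟨-(k^2 + (-1)*n^4 + 2*m*n^2 + m^4 + (-1)*l*n + (-4)*l*m^2*n + 2*l^2*n^2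
      + 2*l^2*m + (-1)*l^4 + 4*k*m*n^2 + (-2)*k*m^2 + (-4)*k*l*n + 4*k*l^2*m
      + (-2)*k^2*m^2 + (-4)*k^2*l*n + 2*k^3 + k^4) - a + b, ?_⟩
    linear_combination (-8 : ℤ) * ha + 8 * hb
  · unfold D4t
    refine ⟨-(k^2 + m^2 + n^4 + 2*m*n^2 + m^4 + l*n + (-4)*l*m^2*n + 2*l^2*n^2
      + (-2)*l^2*m + l^4 + 4*k*m*n^2 + 2*k*m^2 + 4*k*l*n + (-4)*k*l^2*m
      + 2*k^2*m^2 + 4*k^2*l*n + 2*k^3 + k^4) - a + b, ?_⟩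
    linear_combination (-8 : ℤ) * ha + 8 * hb
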